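/- (Proposition 1, converse direction.) Let n ≥ 1, let A be an n×n real sub-generator matrix, α ∈ ℝⁿ a probability vector, and μ, γ_V, γ_R, ρ_J, μ_J > 0. Let τ = αᵀ(μI−A)⁻¹((−A)𝟙), n_G = (1 − τ·(γ_R/(μ+γ_R))·(γ_V/(μ+γ_V)))⁻¹ and ϱ = (τ·(1/(μ+γ_V))·(ρ_J/(ρ_J+μ_J))·n_G)⁻¹, and assume τ > 0. If (J, B, V, R, φ) with J, V, R, φ ∈ ℝ and B ∈ ℝⁿ satisfies the equilibrium equations (E1)–(E4), then φ = ϱ·V; moreover, if (J, B, V, R) ≠ (0, 0, 0, 0) then V ≠ 0. -/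

import Mathlib

open Matrix

/-- The survival-and-exit probability `τ = αᵀ (μI − A)⁻¹ ((−A)𝟙)`. -/
noncomputable def tau {n : ℕ} (A : Matrix (Fin n) (Fin n) ℝ) (α : Fin n → ℝ) (μ : ℝ) : ℝ :=
  α ⬝ᵥ ((μ • (1 : Matrix (Fin n) (Fin n) ℝ) - A)⁻¹ *ᵥ ((-A) *ᵥ (1 : Fin n → ℝ)))

/-- The average number of gonotrophic cycles `n_G`. -/
noncomputable def nG {n : ℕ} (A : Matrix (Fin n) (Fin n) ℝ) (α : Fin n → ℝ)
    (μ γV γR : ℝ) : ℝ :=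
  (1 - tau A α μ * (γR / (μ + γR)) * (γV / (μ + γV)))⁻¹

/-- The threshold quantity `ϱ`. -/
noncomputable def varrho {n : ℕ} (A : Matrix (Fin n) (Fin n) ℝ) (α : Fin n → ℝ)
    (μ γV γR ρJ μJ : ℝ) : ℝ :=
  (tau A α μ * (1 / (μ + γV)) * (ρJ / (ρJ + μJ)) * nG A α μ γV γR)⁻¹

/-- The four equilibrium equations (E1)–(E4) of the mosquito demographic model. -/
def IsEquilibrium {n : ℕ} (A : Matrix (Fin n) (Fin n) ℝ) (α : Fin n → ℝ)
    (μ γV γR ρJ μJ : ℝ) (J : ℝ) (B : Fin n → ℝ) (V R φ : ℝ) : Prop :=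
  φ - (ρJ + μJ) * J = 0 ∧
  (ρJ * J + γR * R) • α + Aᵀ *ᵥ B - μ • B = 0 ∧
  ((-A) *ᵥ (1 : Fin n → ℝ)) ⬝ᵥ B - (γV + μ) * V = 0 ∧
  γV * V - (γR + μ) * R = 0

/-- **Proposition 1, converse direction.**
Any solution of (E1)–(E4) satisfies `φ = ϱ·V`, and a nontrivial solution has `V ≠ 0`. -/
theorem equilibrium_necessary_condition
    (n : ℕ) (hn : 1 ≤ n) (A : Matrix (Fin n) (Fin n) ℝ)
    (hoff : ∀ i j, i ≠ j → 0 ≤ A i j)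
    (hrow : ∀ i, ∑ j, A i j ≤ 0)
    (α : Fin n → ℝ) (hα0 : ∀ i, 0 ≤ α i) (hα1 : ∑ i, α i = 1)
    (μ γV γR ρJ μJ : ℝ)
    (hμ : 0 < μ) (hγV : 0 < γV) (hγR : 0 < γR) (hρJ : 0 < ρJ) (hμJ : 0 < μJ)
    (hτ : 0 < tau A α μ)
    (J : ℝ) (B : Fin n → ℝ) (V R φ : ℝ)
    (heq : IsEquilibrium A α μ γV γR ρJ μJ J B V R φ) :
    φ = varrho A α μ γV γR ρJ μJ * V ∧
      (¬(J = 0 ∧ B = 0 ∧ V = 0 ∧ R = 0) → V ≠ 0) := by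
  obtain ⟨h1, h2, h3, h4⟩ := heq
  set M : Matrix (Fin n) (Fin n) ℝ := μ • (1 : Matrix (Fin n) (Fin n) ℝ) - A with hMdef
  set t : ℝ := tau A α μ with htdef
  have ht0 : t ≠ 0 := ne_of_gt hτ
  -- determinant of M is nonzero (strict row diagonal dominance)
  have hdet : M.det ≠ 0 := by
    apply det_ne_zero_of_sum_row_lt_diag
    intro k
    have hAkk : A k k ≤ 0 := by
      have h := hrow k
      have hsum : 0 ≤ ∑ j ∈ Finset.univ.erase k, A k j :=
        Finset.sum_nonneg fun j hj => hoff k j (Ne.symm (Finset.ne_of_mem_erase hj))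
      have herase := Finset.sum_erase_eq_sub (f := A k) (Finset.mem_univ k)
      rw [herase] at hsum
      linarith
    have hMkk : M k k = μ - A k k := by
      simp [hMdef, Matrix.sub_apply, Matrix.smul_apply, Matrix.one_apply]
    have hsum_eq : ∑ j ∈ Finset.univ.erase k, ‖M k j‖ = ∑ j ∈ Finset.univ.erase k, A k j := by
      apply Finset.sum_congr rfl
      intro j hj
      have hjk : j ≠ k := Finset.ne_of_mem_erase hj
      have : M k j = -A k j := by
        simp [hMdef, Matrix.sub_apply, Matrix.smul_apply, Matrix.one_apply, Ne.symm hjk]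
      rw [this, Real.norm_eq_abs, abs_neg, abs_of_nonneg (hoff k j (Ne.symm hjk))]
    have herase : ∑ j ∈ Finset.univ.erase k, A k j = (∑ j, A k j) - A k k :=
      Finset.sum_erase_eq_sub (Finset.mem_univ k)
    rw [hsum_eq, hMkk, Real.norm_eq_abs, abs_of_pos (by linarith), herase]
    have := hrow k
    linarith
  have hdetU : IsUnit M.det := isUnit_iff_ne_zero.mpr hdet
  -- E2 rewritten
  have hMB : Mᵀ *ᵥ B = (ρJ * J + γR * R) • α := by
    have hT : Mᵀ = μ • (1 : Matrix (Fin n) (Fin n) ℝ) - Aᵀ := by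
      rw [hMdef, Matrix.transpose_sub, Matrix.transpose_smul, Matrix.transpose_one]
    rw [hT, Matrix.sub_mulVec, Matrix.smul_mulVec, Matrix.one_mulVec]
    have h2' : (ρJ * J + γR * R) • α + Aᵀ *ᵥ B = μ • B := sub_eq_zero.mp h2
    rw [← h2']
    abel
  -- the key scalar identity
  set u : Fin n → ℝ := (-A) *ᵥ (1 : Fin n → ℝ) with hudef
  have key : u ⬝ᵥ B = (ρJ * J + γR * R) * t := by
    calc u ⬝ᵥ B = ((M * M⁻¹) *ᵥ u) ⬝ᵥ B := by
            rw [Matrix.mul_nonsing_inv M hdetU, Matrix.one_mulVec]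
      _ = (M *ᵥ (M⁻¹ *ᵥ u)) ⬝ᵥ B := by rw [← Matrix.mulVec_mulVec]
      _ = (M⁻¹ *ᵥ u) ⬝ᵥ (Mᵀ *ᵥ B) := by
            rw [dotProduct_comm, Matrix.dotProduct_mulVec, Matrix.mulVec_transpose,
              dotProduct_comm]
      _ = (M⁻¹ *ᵥ u) ⬝ᵥ ((ρJ * J + γR * R) • α) := by rw [hMB]
      _ = (ρJ * J + γR * R) * (α ⬝ᵥ (M⁻¹ *ᵥ u)) := by
            rw [dotProduct_smul, dotProduct_comm]
            simp [smul_eq_mul]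
      _ = (ρJ * J + γR * R) * t := rfl
  have hcτ : (ρJ * J + γR * R) * t = (γV + μ) * V := by
    rw [← key]; linarith [h3]
  have hγRμ : (γR : ℝ) + μ ≠ 0 := by positivity
  have hμγR : (μ : ℝ) + γR ≠ 0 := by positivity
  have hμγV : (μ : ℝ) + γV ≠ 0 := by positivity
  have hρμJ : (ρJ : ℝ) + μJ ≠ 0 := by positivity
  set D : ℝ := 1 - t * (γR / (μ + γR)) * (γV / (μ + γV)) with hDdef
  have hkey2 : t * ρJ * J = (μ + γV) * D * V := by
    have hR : R = γV * V / (γR + μ) := by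
      field_simp
      linarith [h4]
    rw [hR] at hcτ
    rw [hDdef]
    field_simp at hcτ ⊢
    linear_combination hcτ
  have hφ : φ = (ρJ + μJ) * J := by linarith [h1]
  have hnG : nG A α μ γV γR = D⁻¹ := rfl
  constructor
  · -- φ = ϱ V
    by_cases hD : D = 0
    · have hJ : J = 0 := by
        have := hkey2
        rw [hD] at this
        have : t * ρJ * J = 0 := by linarith [this]
        rcases mul_eq_zero.mp this with h | h
        · exact absurd h (mul_ne_zero ht0 (ne_of_gt hρJ))
        · exact h
      have : varrho A α μ γV γR ρJ μJ = 0 := by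
        unfold varrho
        rw [hnG, hD]
        simp
      rw [this, hφ, hJ]
      ring
    · unfold varrho
      rw [hnG, ← htdef]
      have hb : t * (1 / (μ + γV)) * (ρJ / (ρJ + μJ)) * D⁻¹ ≠ 0 := by
        apply mul_ne_zero
        apply mul_ne_zero
        apply mul_ne_zero ht0
        · simpa using hμγV
        · exact div_ne_zero (ne_of_gt hρJ) hρμJ
        · exact inv_ne_zero hD
      rw [inv_mul_eq_div, eq_div_iff hb, hφ]
      field_simp
      linear_combination hkey2
  · -- nontriviality
    intro hne hV
    apply hne
    have hR : R = 0 := by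
      have := h4
      rw [hV] at this
      have : (γR + μ) * R = 0 := by linarith
      rcases mul_eq_zero.mp this with h | h
      · exact absurd h hγRμ
      · exact h
    have hJ : J = 0 := by
      rw [hV, hR] at hcτ
      have : t * (ρJ * J) = 0 := by linarith [hcτ]
      rcases mul_eq_zero.mp this with h | h
      · exact absurd h ht0
      · rcases mul_eq_zero.mp h with h' | h'
        · exact absurd h' (ne_of_gt hρJ)
        · exact h'
    have hB : B = 0 := by
      have hdetT : Mᵀ.det ≠ 0 := by rwa [Matrix.det_transpose]
      have h0 : Mᵀ *ᵥ B = 0 := by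
        rw [hMB, hJ, hR]
        simp
      calc B = ((Mᵀ)⁻¹ * Mᵀ) *ᵥ B := by
              rw [Matrix.nonsing_inv_mul Mᵀ (isUnit_iff_ne_zero.mpr hdetT), Matrix.one_mulVec]
        _ = (Mᵀ)⁻¹ *ᵥ (Mᵀ *ᵥ B) := by rw [Matrix.mulVec_mulVec]
        _ = 0 := by rw [h0, Matrix.mulVec_zero]
    exact ⟨hJ, hB, hV, hR⟩
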